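/- Let A, B, C, D be complex matrices of suitable sizes. If rank([[A, B],[C, D]]) = rank(A) = rank(B) = rank(C), then rank(A) = rank(D). -/

import Mathlib

open Matrix Submodule LinearMap

set_option linter.unusedSectionVars false

open Matrix Submodule LinearMap

variable {m n₁ n₂ : Type*} [Fintype m] [Fintype n₁] [Fintype n₂]

-- factor lemma
lemma aux_exists [DecidableEq n₂] (B₁ : Matrix m n₁ ℂ) (B₂ : Matrix m n₂ ℂ)
    (h : LinearMap.range B₂.mulVecLin ≤ LinearMap.range B₁.mulVecLin) :
    ∃ X : Matrix n₁ n₂ ℂ, B₂ = B₁ * X := by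
  have hc : ∀ j : n₂, ∃ x : n₁ → ℂ, B₁ *ᵥ x = fun i => B₂ i j := by
    intro j
    have : (B₂ *ᵥ Pi.single j 1) ∈ LinearMap.range B₁.mulVecLin :=
      h ⟨Pi.single j 1, rfl⟩
    obtain ⟨x, hx⟩ := this
    exact ⟨x, by simp at hx; exact hx⟩
  choose X hX using hc
  refine ⟨Matrix.of fun i j => X j i, ?_⟩
  ext i j
  have := congrFun (hX j) i
  simp only [Matrix.mulVec, dotProduct] at this
  simp [Matrix.mul_apply, ← this]

lemma aux_range_fc :
    ∀ (A₁ : Matrix m n₁ ℂ) (A₂ : Matrix m n₂ ℂ),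
    LinearMap.range (fromCols A₁ A₂).mulVecLin
      = LinearMap.range A₁.mulVecLin ⊔ LinearMap.range A₂.mulVecLin := by
  intro A₁ A₂
  apply le_antisymm
  · rintro _ ⟨v, rfl⟩
    have hv : Sum.elim (v ∘ Sum.inl) (v ∘ Sum.inr) = v := by
      ext i; cases i <;> rfl
    rw [mulVecLin_apply, ← hv, fromCols_mulVec_sumElim]
    exact Submodule.add_mem_sup ⟨_, rfl⟩ ⟨_, rfl⟩
  · rw [sup_le_iff]
    constructor
    · rintro _ ⟨v, rfl⟩
      exact ⟨Sum.elim v 0, by simp [fromCols_mulVec_sumElim]⟩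
    · rintro _ ⟨v, rfl⟩
      exact ⟨Sum.elim 0 v, by simp [fromCols_mulVec_sumElim]⟩

lemma aux_rank_fc_left (A₁ : Matrix m n₁ ℂ) (A₂ : Matrix m n₂ ℂ) :
    A₁.rank ≤ (fromCols A₁ A₂).rank := by
  apply Submodule.finrank_mono
  rw [aux_range_fc]
  exact le_sup_left

lemma aux_rank_fr_left {n : Type*} [Fintype n] {m₂ : Type*}
    (A₁ : Matrix m n ℂ) (A₂ : Matrix m₂ n ℂ) :
    A₁.rank ≤ (fromRows A₁ A₂).rank := by
  have hcomp : A₁.mulVecLin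
      = (LinearMap.funLeft ℂ ℂ Sum.inl).comp (fromRows A₁ A₂).mulVecLin := by
    ext v i
    simp [fromRows_mulVec]
  rw [Matrix.rank, hcomp, LinearMap.range_comp]
  exact (Submodule.finrank_map_le _ _).trans_eq rfl

-- main consequence: if rank (fromCols A B) = rank A then B = A * X
lemma aux_fc_factor [DecidableEq n₂] (A₁ : Matrix m n₁ ℂ) (A₂ : Matrix m n₂ ℂ)
    (h : (fromCols A₁ A₂).rank = A₁.rank) : ∃ X : Matrix n₁ n₂ ℂ, A₂ = A₁ * X := by
  apply aux_exists
  have hle : Module.finrank ℂ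
      (LinearMap.range A₁.mulVecLin ⊔ LinearMap.range A₂.mulVecLin : Submodule ℂ (m → ℂ))
      ≤ Module.finrank ℂ (LinearMap.range A₁.mulVecLin) := by
    rw [← aux_range_fc, ← Matrix.rank, ← Matrix.rank, h]
  have hsup := Submodule.eq_of_le_of_finrank_le
    (le_sup_left : LinearMap.range A₁.mulVecLin ≤
      LinearMap.range A₁.mulVecLin ⊔ LinearMap.range A₂.mulVecLin) hle
  calc LinearMap.range A₂.mulVecLin
      ≤ LinearMap.range A₁.mulVecLin ⊔ LinearMap.range A₂.mulVecLin := le_sup_right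
    _ = LinearMap.range A₁.mulVecLin := hsup.symm


/-- The weighted (MN-) adjoint `A^[*] = N⁻¹ Aᴴ M` of a matrix between
indefinite inner product spaces with weights `M` (output) and `N` (input). -/
noncomputable def wadj {m n : ℕ} (M : Matrix (Fin m) (Fin m) ℂ)
    (N : Matrix (Fin n) (Fin n) ℂ) (A : Matrix (Fin m) (Fin n) ℂ) :
    Matrix (Fin n) (Fin m) ℂ := N⁻¹ * Aᴴ * M

/-- `X` is the weighted Moore-Penrose inverse of `A` w.r.t. weights `M`, `N`:
the four weighted Penrose equations. -/
def IsWMP {m n : ℕ} (M : Matrix (Fin m) (Fin m) ℂ)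
    (N : Matrix (Fin n) (Fin n) ℂ) (A : Matrix (Fin m) (Fin n) ℂ)
    (X : Matrix (Fin n) (Fin m) ℂ) : Prop :=
  A * X * A = A ∧ X * A * X = X ∧
    wadj M M (A * X) = A * X ∧ wadj N N (X * A) = X * A

theorem stmt_6 {m n k l : ℕ}
    (A : Matrix (Fin m) (Fin n) ℂ) (B : Matrix (Fin m) (Fin l) ℂ)
    (C : Matrix (Fin k) (Fin n) ℂ) (D : Matrix (Fin k) (Fin l) ℂ)
    (h : (Matrix.fromBlocks A B C D).rank = A.rank)
    (hB : A.rank = B.rank) (hC : A.rank = C.rank) :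
    A.rank = D.rank := by

  set T := fromCols A B with hTdef
  set Bo := fromCols C D with hBodef
  have hF : fromRows T Bo = fromBlocks A B C D := fromRows_fromCols_eq_fromBlocks A B C D
  have hT : T.rank = A.rank := by
    refine le_antisymm ?_ (aux_rank_fc_left A B)
    calc T.rank ≤ (fromRows T Bo).rank := aux_rank_fr_left T Bo
      _ = A.rank := by rw [hF, h]
  obtain ⟨X, hX⟩ := aux_fc_factor A B hT
  have hFt : (fromBlocks A B C D)ᵀ = fromCols Tᵀ Boᵀ := by
    rw [← hF, transpose_fromRows]
  have hTt : (fromCols Tᵀ Boᵀ).rank = Tᵀ.rank := by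
    refine le_antisymm ?_ (aux_rank_fc_left Tᵀ Boᵀ)
    rw [← hFt, rank_transpose, h, ← hT, ← rank_transpose]
  obtain ⟨Z, hZ⟩ := aux_fc_factor Tᵀ Boᵀ hTt
  have hBo : Bo = Zᵀ * T := by
    have := congrArg Matrix.transpose hZ
    simpa [Matrix.transpose_mul] using this
  have hBo2 : fromCols C D = fromCols (Zᵀ * A) (Zᵀ * B) := by
    rw [← mul_fromCols, ← hTdef, ← hBodef, hBo]
  obtain ⟨hCE, hDE⟩ := (fromCols_ext_iff _ _ _ _).mp hBo2
  have hrB : LinearMap.range B.mulVecLin ≤ LinearMap.range A.mulVecLin := by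
    rw [hX]
    rintro _ ⟨v, rfl⟩
    exact ⟨X *ᵥ v, by simp [Matrix.mulVec_mulVec]⟩
  have heq := Submodule.eq_of_le_of_finrank_le hrB
    (by rw [← Matrix.rank, ← Matrix.rank, hB])
  obtain ⟨W, hW⟩ := aux_exists B A heq.ge
  have hCD : C = D * W := by rw [hCE, hDE, hW, Matrix.mul_assoc]
  refine le_antisymm ?_ ?_
  · calc A.rank = C.rank := hC
      _ = (D * W).rank := by rw [hCD]
      _ ≤ D.rank := Matrix.rank_mul_le_left D W
  · calc D.rank = (Zᵀ * B).rank := by rw [hDE]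
      _ ≤ B.rank := Matrix.rank_mul_le_right Zᵀ B
      _ = A.rank := hB.symm
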